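/- Specialization of equation (Done) at X = 0: for all n ≥ 0, ((-1)^n (3n+1)!)/(3^{n+1} n!³ (−n+1/3)_{2n+1}) · n! · (2/3)_n = (√(-3))^n Σ_{r=0}^n w^{−r−n} C(n+r,n) C(2n−r,n), where w = e^{iπ/3}; equivalently Σ_{r=0}^n w^{−r−n} C(n+r,n) C(2n−r,n) is a real number equal to the left side divided by (i√3)^n. -/

import Mathlib

open Complex

/-- The rising factorial `(a)ₘ = a(a+1)⋯(a+m-1)`. -/
noncomputable def risingFac (a : ℂ) (m : ℕ) : ℂ :=
  ∏ i ∈ Finset.range m, (a + i)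

namespace EqDoneAux

/-- certificate polynomial -/
noncomputable def Qp (u x y : ℂ) : ℂ :=
  (-5 + u) + 6*y + (-1-u)*y^2 + (-15+3*u)*x + (7+u)*x*y + (-10+2*u)*x^2

/-- truncated falling product -/
noncomputable def Pp (n r : ℕ) : ℂ :=
  ∏ i ∈ Finset.range (n-1), (2*(n:ℂ) - (r:ℂ) - (i:ℂ))

/-- the summand -/
noncomputable def Tt (u : ℂ) (n r : ℕ) : ℂ :=
  u^(n+r) * ((n+r).choose n : ℂ) * ((2*n-r).choose n : ℂ)

/-- Gosper certificate term (times (n+1)!) -/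
noncomputable def Hg (u : ℂ) (n r : ℕ) : ℂ :=
  u^(n+r) * (r:ℂ) * Qp u n r * ((n+r).choose n : ℂ) * Pp n r

noncomputable def Ssum (u : ℂ) (n : ℕ) : ℂ := ∑ r ∈ Finset.range (n+1), Tt u n r

/- ### cast choose identities -/

lemma hc1 (n r : ℕ) :
    ((n:ℂ)+1) * ((n+1+r).choose (n+1) : ℂ)
      = ((n:ℂ)+(r:ℂ)+1) * ((n+r).choose n : ℂ) := by
  have h := Nat.add_one_mul_choose_eq (n+r) n
  rw [show n+1+r = (n+r)+1 by omega]
  have h' := congrArg (Nat.cast : ℕ → ℂ) h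
  push_cast at h'
  linear_combination -h'

lemma hc3 (n r : ℕ) :
    ((r:ℂ)+1) * ((n+(r+1)).choose n : ℂ)
      = ((n:ℂ)+(r:ℂ)+1) * ((n+r).choose n : ℂ) := by
  have h := Nat.add_one_mul_choose_eq (n+r) r
  have h2 : (n+r).choose r = (n+r).choose n := by
    rw [Nat.add_comm n r]; exact Nat.choose_symm_add
  have h3 : (n+(r+1)).choose n = (n+r+1).choose (r+1) := by
    rw [Nat.choose_symm_add, show n+(r+1) = n+r+1 by omega]
  rw [h2] at h
  rw [h3]
  have h' := congrArg (Nat.cast : ℕ → ℂ) h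
  push_cast at h'
  linear_combination -h'

lemma hc2 (M n : ℕ) (h : n ≤ M) :
    ((n:ℂ)+1) * ((M:ℂ)+1-(n:ℂ)) * ((M+2).choose (n+1) : ℂ)
      = ((M:ℂ)+1) * ((M:ℂ)+2) * (M.choose n : ℂ) := by
  have i1 := Nat.add_one_mul_choose_eq (M+1) n
  rw [show M+1+1 = M+2 by omega] at i1
  have i2 := Nat.choose_succ_right_eq (M+1) n
  have i3 := Nat.add_one_mul_choose_eq M n
  have i1' := congrArg (Nat.cast : ℕ → ℂ) i1
  have i2' := congrArg (Nat.cast : ℕ → ℂ) i2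
  have i3' := congrArg (Nat.cast : ℕ → ℂ) i3
  rw [Nat.cast_mul, Nat.cast_mul, Nat.cast_sub (show n ≤ M+1 by omega)] at i2'
  push_cast at i1' i2' i3'
  linear_combination (-((M:ℂ)+1-(n:ℂ)))*i1' - ((M:ℂ)+2)*i2' - ((M:ℂ)+2)*i3'

lemma Pp_succ (m r : ℕ) :
    Pp (m+1) r = ∏ i ∈ Finset.range m, (2*(m:ℂ) + 2 - (r:ℂ) - (i:ℂ)) := by
  simp only [Pp, Nat.add_sub_cancel]
  exact Finset.prod_congr rfl fun i _ => by push_cast; ring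

lemma hPb (m r : ℕ) (hr : r ≤ m+1) :
    Pp (m+1) r * ((m:ℂ)+2-(r:ℂ))
      = (((m+1).factorial : ℕ) : ℂ) * ((2*(m+1)-r).choose (m+1) : ℂ) := by
  have e2 : Pp (m+1) r * ((m:ℂ)+2-(r:ℂ))
      = ∏ i ∈ Finset.range (m+1), (2*(m:ℂ)+2-(r:ℂ)-(i:ℂ)) := by
    rw [Pp_succ, Finset.prod_range_succ]; congr 1; push_cast; ring
  have e3 : (∏ i ∈ Finset.range (m+1), (2*(m:ℂ)+2-(r:ℂ)-(i:ℂ)))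
      = (((2*(m+1)-r).descFactorial (m+1) : ℕ) : ℂ) := by
    rw [Nat.descFactorial_eq_prod_range, Nat.cast_prod]
    refine Finset.prod_congr rfl fun i hi => ?_
    have hi' : i < m+1 := Finset.mem_range.mp hi
    rw [Nat.cast_sub (by omega : i ≤ 2*(m+1)-r), Nat.cast_sub (by omega : r ≤ 2*(m+1))]
    push_cast; ring
  rw [e2, e3, Nat.descFactorial_eq_factorial_mul_choose]
  push_cast; ring

lemma hPshift (m r : ℕ) :
    (2*(m:ℂ)+2-(r:ℂ)) * Pp (m+1) (r+1) = Pp (m+1) r * ((m:ℂ)+2-(r:ℂ)) := by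
  have e1 : Pp (m+1) (r+1) = ∏ i ∈ Finset.range m, (2*(m:ℂ)+2-(r:ℂ)-((i:ℂ)+1)) := by
    rw [Pp_succ]; exact Finset.prod_congr rfl fun i _ => by push_cast; ring
  have e2 : Pp (m+1) r * ((m:ℂ)+2-(r:ℂ))
      = ∏ i ∈ Finset.range (m+1), (2*(m:ℂ)+2-(r:ℂ)-(i:ℂ)) := by
    rw [Pp_succ, Finset.prod_range_succ]; congr 1; push_cast; ring
  rw [e1, e2, Finset.prod_range_succ']
  push_cast; ring

lemma Pp_boundary (m : ℕ) : Pp (m+1) (m+2) = ((m.factorial : ℕ) : ℂ) := by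
  rw [Pp_succ, ← Nat.descFactorial_self m, Nat.descFactorial_eq_prod_range, Nat.cast_prod]
  refine Finset.prod_congr rfl fun i hi => ?_
  have hi' : i < m := Finset.mem_range.mp hi
  rw [Nat.cast_sub (by omega : i ≤ m)]
  push_cast; ring

set_option maxHeartbeats 1600000 in
lemma step_term (u : ℂ) (hu : u*u = u-1) (m r : ℕ) (hr : r ≤ m+1) :
    (((m+2).factorial : ℕ) : ℂ) *
        (((m:ℂ)+2)*(1-2*u)*Tt u (m+2) r - 3*(3*(m:ℂ)+5)*Tt u (m+1) r)
      = Hg u (m+1) (r+1) - Hg u (m+1) r := by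
  have h7 : (((m+2).factorial : ℕ) : ℂ) = (((m:ℂ)+1)+1) * (((m+1).factorial : ℕ) : ℂ) := by
    rw [show m+2 = (m+1)+1 by omega, Nat.factorial_succ]
    push_cast; ring
  have h1 : (((m:ℂ)+1)+1) * (((m+2+r).choose (m+2) : ℕ) : ℂ)
      = (((m:ℂ)+1)+(r:ℂ)+1) * (((m+1+r).choose (m+1) : ℕ) : ℂ) := by
    have := hc1 (m+1) r
    rw [show m+1+1+r = m+2+r by omega, show m+1+1 = m+2 by omega] at this
    push_cast at this ⊢
    linear_combination this
  have h2 : (((m:ℂ)+1)+1) * (((m:ℂ)+1)+1-(r:ℂ)) * (((2*(m+2)-r).choose (m+2) : ℕ) : ℂ)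
      = (2*((m:ℂ)+1)+1-(r:ℂ)) * (2*((m:ℂ)+1)+2-(r:ℂ)) * (((2*(m+1)-r).choose (m+1) : ℕ) : ℂ) := by
    have := hc2 (2*(m+1)-r) (m+1) (by omega)
    rw [show 2*(m+1)-r+2 = 2*(m+2)-r by omega, show m+1+1 = m+2 by omega,
      Nat.cast_sub (show r ≤ 2*(m+1) by omega)] at this
    push_cast at this ⊢
    linear_combination this
  have h3 : ((r:ℂ)+1) * (((m+1+(r+1)).choose (m+1) : ℕ) : ℂ)
      = (((m:ℂ)+1)+(r:ℂ)+1) * (((m+1+r).choose (m+1) : ℕ) : ℂ) := by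
    have := hc3 (m+1) r
    push_cast at this ⊢
    linear_combination this
  have h4 : Pp (m+1) r * (((m:ℂ)+1)+1-(r:ℂ))
      = (((m+1).factorial : ℕ) : ℂ) * (((2*(m+1)-r).choose (m+1) : ℕ) : ℂ) := by
    have := hPb m r hr
    push_cast at this ⊢
    linear_combination this
  have h6 : (2*((m:ℂ)+1)-(r:ℂ)) * Pp (m+1) (r+1) = Pp (m+1) r * (((m:ℂ)+1)+1-(r:ℂ)) := by
    have := hPshift m r
    push_cast at this ⊢
    linear_combination this
  have hD : ((((m:ℂ)+1)+1-(r:ℂ)) * (2*((m:ℂ)+1)-(r:ℂ))) ≠ 0 := by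
    have d1 : (((m:ℂ)+1)+1-(r:ℂ)) = ((m+2-r : ℕ) : ℂ) := by
      rw [Nat.cast_sub (by omega : r ≤ m+2)]; push_cast; ring
    have d2 : (2*((m:ℂ)+1)-(r:ℂ)) = ((2*(m+1)-r : ℕ) : ℂ) := by
      rw [Nat.cast_sub (by omega : r ≤ 2*(m+1))]; push_cast; ring
    rw [d1, d2]
    exact mul_ne_zero (Nat.cast_ne_zero.2 (by omega)) (Nat.cast_ne_zero.2 (by omega))
  refine mul_left_cancel₀ hD ?_
  simp only [Tt, Hg, Qp]
  push_cast
  linear_combination ((6)*(r:ℂ)*u^(m+1+r)*(((m+1+r).choose (m+1) : ℕ):ℂ)*(((2*(m+1)-r).choose (m+1) : ℕ):ℂ) + (-1)*(r:ℂ)*u*u^(m+1+r)*(((m+2+r).choose (m+2) : ℕ):ℂ)*(((2*(m+2)-r).choose (m+2) : ℕ):ℂ) + (2)*(r:ℂ)*u^2*u^(m+1+r)*(((m+2+r).choose (m+2) : ℕ):ℂ)*(((2*(m+2)-r).choose (m+2) : ℕ):ℂ) + (-6)*(r:ℂ)^2*u^(m+1+r)*(((m+1+r).choose (m+1) : ℕ):ℂ)*(((2*(m+1)-r).choose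 (m+1) : ℕ):ℂ) + (r:ℂ)^2*u*u^(m+1+r)*(((m+2+r).choose (m+2) : ℕ):ℂ)*(((2*(m+2)-r).choose (m+2) : ℕ):ℂ) + (-2)*(r:ℂ)^2*u^2*u^(m+1+r)*(((m+2+r).choose (m+2) : ℕ):ℂ)*(((2*(m+2)-r).choose (m+2) : ℕ):ℂ) + (-12)*((m:ℂ)+1)*u^(m+1+r)*(((m+1+r).choose (m+1) : ℕ):ℂ)*(((2*(m+1)-r).choose (m+1) : ℕ):ℂ) + (2)*((m:ℂ)+1)*u*u^(m+1+r)*(((m+2+r).choose (m+2) : ℕ):ℂ)*(((2*(m+2)-r).choose (m+2) : ℕ):ℂ) + (-4)*((m:ℂ)+1)*u^2*u^(m+1+r)*(((m+2+r).choose (m+2) : ℕ):ℂ)*(((2*(m+2)-r).choose (m+2) : ℕ):ℂ) + (27)*((m:ℂ)+1)*(r:ℂ)*u^(m+1+r)*(((m+1+r).choose (m+1) : ℕ):ℂ)*(((2*(m+1)-r).choose (m+1) : ℕ):ℂ) + (-4)*((m:ℂ)+1)*(r:ℂ)*u*u^(m+1+r)*(((m+2+r).choose (m+2) : ℕ):ℂ)*(((2*(m+2)-r).choose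 (m+2) : ℕ):ℂ) + (8)*((m:ℂ)+1)*(r:ℂ)*u^2*u^(m+1+r)*(((m+2+r).choose (m+2) : ℕ):ℂ)*(((2*(m+2)-r).choose (m+2) : ℕ):ℂ) + (-9)*((m:ℂ)+1)*(r:ℂ)^2*u^(m+1+r)*(((m+1+r).choose (m+1) : ℕ):ℂ)*(((2*(m+1)-r).choose (m+1) : ℕ):ℂ) + ((m:ℂ)+1)*(r:ℂ)^2*u*u^(m+1+r)*(((m+2+r).choose (m+2) : ℕ):ℂ)*(((2*(m+2)-r).choose (m+2) : ℕ):ℂ) + (-2)*((m:ℂ)+1)*(r:ℂ)^2*u^2*u^(m+1+r)*(((m+2+r).choose (m+2) : ℕ):ℂ)*(((2*(m+2)-r).choose (m+2) : ℕ):ℂ) + (-30)*((m:ℂ)+1)^2*u^(m+1+r)*(((m+1+r).choose (m+1) : ℕ):ℂ)*(((2*(m+1)-r).choose (m+1) : ℕ):ℂ) + (4)*((m:ℂ)+1)^2*u*u^(m+1+r)*(((m+2+r).choose (m+2) : ℕ):ℂ)*(((2*(m+2)-r).choose (m+2) : ℕ):ℂ) + (-8)*((m:ℂ)+1)^2*u^2*u^(m+1+r)*(((m+2+r).choose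 (m+2) : ℕ):ℂ)*(((2*(m+2)-r).choose (m+2) : ℕ):ℂ) + (27)*((m:ℂ)+1)^2*(r:ℂ)*u^(m+1+r)*(((m+1+r).choose (m+1) : ℕ):ℂ)*(((2*(m+1)-r).choose (m+1) : ℕ):ℂ) + (-3)*((m:ℂ)+1)^2*(r:ℂ)*u*u^(m+1+r)*(((m+2+r).choose (m+2) : ℕ):ℂ)*(((2*(m+2)-r).choose (m+2) : ℕ):ℂ) + (6)*((m:ℂ)+1)^2*(r:ℂ)*u^2*u^(m+1+r)*(((m+2+r).choose (m+2) : ℕ):ℂ)*(((2*(m+2)-r).choose (m+2) : ℕ):ℂ) + (-18)*((m:ℂ)+1)^3*u^(m+1+r)*(((m+1+r).choose (m+1) : ℕ):ℂ)*(((2*(m+1)-r).choose (m+1) : ℕ):ℂ) + (2)*((m:ℂ)+1)^3*u*u^(m+1+r)*(((m+2+r).choose (m+2) : ℕ):ℂ)*(((2*(m+2)-r).choose (m+2) : ℕ):ℂ) + (-4)*((m:ℂ)+1)^3*u^2*u^(m+1+r)*(((m+2+r).choose (m+2) : ℕ):ℂ)*(((2*(m+2)-r).choose (m+2) : ℕ):ℂ))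 * h7 +
      ((-1)*(r:ℂ)*u*u^(m+1+r)*(((2*(m+2)-r).choose (m+2) : ℕ):ℂ)*(((m+1).factorial : ℕ):ℂ) + (2)*(r:ℂ)*u^2*u^(m+1+r)*(((2*(m+2)-r).choose (m+2) : ℕ):ℂ)*(((m+1).factorial : ℕ):ℂ) + (r:ℂ)^2*u*u^(m+1+r)*(((2*(m+2)-r).choose (m+2) : ℕ):ℂ)*(((m+1).factorial : ℕ):ℂ) + (-2)*(r:ℂ)^2*u^2*u^(m+1+r)*(((2*(m+2)-r).choose (m+2) : ℕ):ℂ)*(((m+1).factorial : ℕ):ℂ) + (2)*((m:ℂ)+1)*u*u^(m+1+r)*(((2*(m+2)-r).choose (m+2) : ℕ):ℂ)*(((m+1).factorial : ℕ):ℂ) + (-4)*((m:ℂ)+1)*u^2*u^(m+1+r)*(((2*(m+2)-r).choose (m+2) : ℕ):ℂ)*(((m+1).factorial : ℕ):ℂ) + (-4)*((m:ℂ)+1)*(r:ℂ)*u*u^(m+1+r)*(((2*(m+2)-r).choose (m+2) : ℕ):ℂ)*(((m+1).factorial : ℕ):ℂ) + (8)*((m:ℂ)+1)*(r:ℂ)*u^2*u^(m+1+r)*(((2*(m+2)-r).choose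 (m+2) : ℕ):ℂ)*(((m+1).factorial : ℕ):ℂ) + ((m:ℂ)+1)*(r:ℂ)^2*u*u^(m+1+r)*(((2*(m+2)-r).choose (m+2) : ℕ):ℂ)*(((m+1).factorial : ℕ):ℂ) + (-2)*((m:ℂ)+1)*(r:ℂ)^2*u^2*u^(m+1+r)*(((2*(m+2)-r).choose (m+2) : ℕ):ℂ)*(((m+1).factorial : ℕ):ℂ) + (4)*((m:ℂ)+1)^2*u*u^(m+1+r)*(((2*(m+2)-r).choose (m+2) : ℕ):ℂ)*(((m+1).factorial : ℕ):ℂ) + (-8)*((m:ℂ)+1)^2*u^2*u^(m+1+r)*(((2*(m+2)-r).choose (m+2) : ℕ):ℂ)*(((m+1).factorial : ℕ):ℂ) + (-3)*((m:ℂ)+1)^2*(r:ℂ)*u*u^(m+1+r)*(((2*(m+2)-r).choose (m+2) : ℕ):ℂ)*(((m+1).factorial : ℕ):ℂ) + (6)*((m:ℂ)+1)^2*(r:ℂ)*u^2*u^(m+1+r)*(((2*(m+2)-r).choose (m+2) : ℕ):ℂ)*(((m+1).factorial : ℕ):ℂ) + (2)*((m:ℂ)+1)^3*u*u^(m+1+r)*(((2*(m+2)-r).choose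 (m+2) : ℕ):ℂ)*(((m+1).factorial : ℕ):ℂ) + (-4)*((m:ℂ)+1)^3*u^2*u^(m+1+r)*(((2*(m+2)-r).choose (m+2) : ℕ):ℂ)*(((m+1).factorial : ℕ):ℂ)) * h1 +
      ((-1)*(r:ℂ)*u*u^(m+1+r)*(((m+1+r).choose (m+1) : ℕ):ℂ)*(((m+1).factorial : ℕ):ℂ) + (2)*(r:ℂ)*u^2*u^(m+1+r)*(((m+1+r).choose (m+1) : ℕ):ℂ)*(((m+1).factorial : ℕ):ℂ) + (-1)*(r:ℂ)^2*u*u^(m+1+r)*(((m+1+r).choose (m+1) : ℕ):ℂ)*(((m+1).factorial : ℕ):ℂ) + (2)*(r:ℂ)^2*u^2*u^(m+1+r)*(((m+1+r).choose (m+1) : ℕ):ℂ)*(((m+1).factorial : ℕ):ℂ) + (2)*((m:ℂ)+1)*u*u^(m+1+r)*(((m+1+r).choose (m+1) : ℕ):ℂ)*(((m+1).factorial : ℕ):ℂ) + (-4)*((m:ℂ)+1)*u^2*u^(m+1+r)*(((m+1+r).choose (m+1) : ℕ):ℂ)*(((m+1).factorial : ℕ):ℂ) + ((m:ℂ)+1)*(r:ℂ)*u*u^(m+1+r)*(((m+1+r).choose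 (m+1) : ℕ):ℂ)*(((m+1).factorial : ℕ):ℂ) + (-2)*((m:ℂ)+1)*(r:ℂ)*u^2*u^(m+1+r)*(((m+1+r).choose (m+1) : ℕ):ℂ)*(((m+1).factorial : ℕ):ℂ) + (2)*((m:ℂ)+1)^2*u*u^(m+1+r)*(((m+1+r).choose (m+1) : ℕ):ℂ)*(((m+1).factorial : ℕ):ℂ) + (-4)*((m:ℂ)+1)^2*u^2*u^(m+1+r)*(((m+1+r).choose (m+1) : ℕ):ℂ)*(((m+1).factorial : ℕ):ℂ)) * h2 +
      ((4)*(r:ℂ)^2*u*u^(m+1+r)*(Pp (m+1) (r+1)) + (-2)*(r:ℂ)^2*u^2*u^(m+1+r)*(Pp (m+1) (r+1)) + (-5)*(r:ℂ)^3*u*u^(m+1+r)*(Pp (m+1) (r+1)) + (r:ℂ)^3*u^2*u^(m+1+r)*(Pp (m+1) (r+1)) + (r:ℂ)^4*u*u^(m+1+r)*(Pp (m+1) (r+1)) + (r:ℂ)^4*u^2*u^(m+1+r)*(Pp (m+1) (r+1)) + (-16)*((m:ℂ)+1)*(r:ℂ)*u*u^(m+1+r)*(Pp (m+1) (r+1))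 + (8)*((m:ℂ)+1)*(r:ℂ)*u^2*u^(m+1+r)*(Pp (m+1) (r+1)) + (29)*((m:ℂ)+1)*(r:ℂ)^2*u*u^(m+1+r)*(Pp (m+1) (r+1)) + (-7)*((m:ℂ)+1)*(r:ℂ)^2*u^2*u^(m+1+r)*(Pp (m+1) (r+1)) + (-10)*((m:ℂ)+1)*(r:ℂ)^3*u*u^(m+1+r)*(Pp (m+1) (r+1)) + (-4)*((m:ℂ)+1)*(r:ℂ)^3*u^2*u^(m+1+r)*(Pp (m+1) (r+1)) + (16)*((m:ℂ)+1)^2*u*u^(m+1+r)*(Pp (m+1) (r+1)) + (-8)*((m:ℂ)+1)^2*u^2*u^(m+1+r)*(Pp (m+1) (r+1)) + (-56)*((m:ℂ)+1)^2*(r:ℂ)*u*u^(m+1+r)*(Pp (m+1) (r+1)) + (16)*((m:ℂ)+1)^2*(r:ℂ)*u^2*u^(m+1+r)*(Pp (m+1) (r+1)) + (33)*((m:ℂ)+1)^2*(r:ℂ)^2*u*u^(m+1+r)*(Pp (m+1) (r+1)) + (3)*((m:ℂ)+1)^2*(r:ℂ)^2*u^2*u^(m+1+r)*(Pp (m+1)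 (r+1)) + (36)*((m:ℂ)+1)^3*u*u^(m+1+r)*(Pp (m+1) (r+1)) + (-12)*((m:ℂ)+1)^3*u^2*u^(m+1+r)*(Pp (m+1) (r+1)) + (-44)*((m:ℂ)+1)^3*(r:ℂ)*u*u^(m+1+r)*(Pp (m+1) (r+1)) + (4)*((m:ℂ)+1)^3*(r:ℂ)*u^2*u^(m+1+r)*(Pp (m+1) (r+1)) + (20)*((m:ℂ)+1)^4*u*u^(m+1+r)*(Pp (m+1) (r+1)) + (-4)*((m:ℂ)+1)^4*u^2*u^(m+1+r)*(Pp (m+1) (r+1))) * h3 +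
      ((-4)*(r:ℂ)*u*u^(m+1+r)*(((m+1+r).choose (m+1) : ℕ):ℂ) + (2)*(r:ℂ)*u^2*u^(m+1+r)*(((m+1+r).choose (m+1) : ℕ):ℂ) + (r:ℂ)^2*u*u^(m+1+r)*(((m+1+r).choose (m+1) : ℕ):ℂ) + (r:ℂ)^2*u^2*u^(m+1+r)*(((m+1+r).choose (m+1) : ℕ):ℂ) + (4)*(r:ℂ)^3*u*u^(m+1+r)*(((m+1+r).choose (m+1) : ℕ):ℂ) + (-2)*(r:ℂ)^3*u^2*u^(m+1+r)*(((m+1+r).choose (m+1) : ℕ):ℂ) + (-1)*(r:ℂ)^4*u*u^(m+1+r)*(((m+1+r).choose (m+1) : ℕ):ℂ) + (-1)*(r:ℂ)^4*u^2*u^(m+1+r)*(((m+1+r).choose (m+1) : ℕ):ℂ) + (8)*((m:ℂ)+1)*u*u^(m+1+r)*(((m+1+r).choose (m+1) : ℕ):ℂ) + (-4)*((m:ℂ)+1)*u^2*u^(m+1+r)*(((m+1+r).choose (m+1) : ℕ):ℂ) + (-15)*((m:ℂ)+1)*(r:ℂ)*u*u^(m+1+r)*(((m+1+r).choose (m+1)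 : ℕ):ℂ) + (3)*((m:ℂ)+1)*(r:ℂ)*u^2*u^(m+1+r)*(((m+1+r).choose (m+1) : ℕ):ℂ) + (-6)*((m:ℂ)+1)*(r:ℂ)^2*u*u^(m+1+r)*(((m+1+r).choose (m+1) : ℕ):ℂ) + (6)*((m:ℂ)+1)*(r:ℂ)^2*u^2*u^(m+1+r)*(((m+1+r).choose (m+1) : ℕ):ℂ) + (7)*((m:ℂ)+1)*(r:ℂ)^3*u*u^(m+1+r)*(((m+1+r).choose (m+1) : ℕ):ℂ) + ((m:ℂ)+1)*(r:ℂ)^3*u^2*u^(m+1+r)*(((m+1+r).choose (m+1) : ℕ):ℂ) + (26)*((m:ℂ)+1)^2*u*u^(m+1+r)*(((m+1+r).choose (m+1) : ℕ):ℂ) + (-10)*((m:ℂ)+1)^2*u^2*u^(m+1+r)*(((m+1+r).choose (m+1) : ℕ):ℂ) + (-18)*((m:ℂ)+1)^2*(r:ℂ)*u*u^(m+1+r)*(((m+1+r).choose (m+1) : ℕ):ℂ) + (-9)*((m:ℂ)+1)^2*(r:ℂ)^2*u*u^(m+1+r)*(((m+1+r).choose (m+1) : ℕ):ℂ) + (3)*((m:ℂ)+1)^2*(r:ℂ)^2*u^2*u^(m+1+r)*(((m+1+r).choose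 (m+1) : ℕ):ℂ) + (28)*((m:ℂ)+1)^3*u*u^(m+1+r)*(((m+1+r).choose (m+1) : ℕ):ℂ) + (-8)*((m:ℂ)+1)^3*u^2*u^(m+1+r)*(((m+1+r).choose (m+1) : ℕ):ℂ) + (-7)*((m:ℂ)+1)^3*(r:ℂ)*u*u^(m+1+r)*(((m+1+r).choose (m+1) : ℕ):ℂ) + (-1)*((m:ℂ)+1)^3*(r:ℂ)*u^2*u^(m+1+r)*(((m+1+r).choose (m+1) : ℕ):ℂ) + (10)*((m:ℂ)+1)^4*u*u^(m+1+r)*(((m+1+r).choose (m+1) : ℕ):ℂ) + (-2)*((m:ℂ)+1)^4*u^2*u^(m+1+r)*(((m+1+r).choose (m+1) : ℕ):ℂ)) * h6 +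
      ((-6)*(r:ℂ)*u^(m+1+r)*(((m+1+r).choose (m+1) : ℕ):ℂ) + (2)*(r:ℂ)*u*u^(m+1+r)*(((m+1+r).choose (m+1) : ℕ):ℂ) + (-4)*(r:ℂ)*u^2*u^(m+1+r)*(((m+1+r).choose (m+1) : ℕ):ℂ) + (6)*(r:ℂ)^2*u^(m+1+r)*(((m+1+r).choose (m+1) : ℕ):ℂ) + (-1)*(r:ℂ)^2*u*u^(m+1+r)*(((m+1+r).choose (m+1) : ℕ):ℂ) + (2)*(r:ℂ)^2*u^2*u^(m+1+r)*(((m+1+r).choose (m+1) : ℕ):ℂ) + (-2)*(r:ℂ)^3*u*u^(m+1+r)*(((m+1+r).choose (m+1) : ℕ):ℂ) + (4)*(r:ℂ)^3*u^2*u^(m+1+r)*(((m+1+r).choose (m+1) : ℕ):ℂ) + (r:ℂ)^4*u*u^(m+1+r)*(((m+1+r).choose (m+1) : ℕ):ℂ) + (-2)*(r:ℂ)^4*u^2*u^(m+1+r)*(((m+1+r).choose (m+1) : ℕ):ℂ) + (12)*((m:ℂ)+1)*u^(m+1+r)*(((m+1+r).choose (m+1) : ℕ):ℂ) + (-4)*((m:ℂ)+1)*u*u^(m+1+r)*(((m+1+r).choose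 (m+1) : ℕ):ℂ) + (8)*((m:ℂ)+1)*u^2*u^(m+1+r)*(((m+1+r).choose (m+1) : ℕ):ℂ) + (-33)*((m:ℂ)+1)*(r:ℂ)*u^(m+1+r)*(((m+1+r).choose (m+1) : ℕ):ℂ) + (10)*((m:ℂ)+1)*(r:ℂ)*u*u^(m+1+r)*(((m+1+r).choose (m+1) : ℕ):ℂ) + (-20)*((m:ℂ)+1)*(r:ℂ)*u^2*u^(m+1+r)*(((m+1+r).choose (m+1) : ℕ):ℂ) + (15)*((m:ℂ)+1)*(r:ℂ)^2*u^(m+1+r)*(((m+1+r).choose (m+1) : ℕ):ℂ) + (3)*((m:ℂ)+1)*(r:ℂ)^2*u*u^(m+1+r)*(((m+1+r).choose (m+1) : ℕ):ℂ) + (-6)*((m:ℂ)+1)*(r:ℂ)^2*u^2*u^(m+1+r)*(((m+1+r).choose (m+1) : ℕ):ℂ) + (-5)*((m:ℂ)+1)*(r:ℂ)^3*u*u^(m+1+r)*(((m+1+r).choose (m+1) : ℕ):ℂ) + (10)*((m:ℂ)+1)*(r:ℂ)^3*u^2*u^(m+1+r)*(((m+1+r).choose (m+1) : ℕ):ℂ)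 + (42)*((m:ℂ)+1)^2*u^(m+1+r)*(((m+1+r).choose (m+1) : ℕ):ℂ) + (-16)*((m:ℂ)+1)^2*u*u^(m+1+r)*(((m+1+r).choose (m+1) : ℕ):ℂ) + (32)*((m:ℂ)+1)^2*u^2*u^(m+1+r)*(((m+1+r).choose (m+1) : ℕ):ℂ) + (-54)*((m:ℂ)+1)^2*(r:ℂ)*u^(m+1+r)*(((m+1+r).choose (m+1) : ℕ):ℂ) + (12)*((m:ℂ)+1)^2*(r:ℂ)*u*u^(m+1+r)*(((m+1+r).choose (m+1) : ℕ):ℂ) + (-24)*((m:ℂ)+1)^2*(r:ℂ)*u^2*u^(m+1+r)*(((m+1+r).choose (m+1) : ℕ):ℂ) + (9)*((m:ℂ)+1)^2*(r:ℂ)^2*u^(m+1+r)*(((m+1+r).choose (m+1) : ℕ):ℂ) + (6)*((m:ℂ)+1)^2*(r:ℂ)^2*u*u^(m+1+r)*(((m+1+r).choose (m+1) : ℕ):ℂ) + (-12)*((m:ℂ)+1)^2*(r:ℂ)^2*u^2*u^(m+1+r)*(((m+1+r).choose (m+1) : ℕ):ℂ) + (48)*((m:ℂ)+1)^3*u^(m+1+r)*(((m+1+r).choose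 (m+1) : ℕ):ℂ) + (-20)*((m:ℂ)+1)^3*u*u^(m+1+r)*(((m+1+r).choose (m+1) : ℕ):ℂ) + (40)*((m:ℂ)+1)^3*u^2*u^(m+1+r)*(((m+1+r).choose (m+1) : ℕ):ℂ) + (-27)*((m:ℂ)+1)^3*(r:ℂ)*u^(m+1+r)*(((m+1+r).choose (m+1) : ℕ):ℂ) + (4)*((m:ℂ)+1)^3*(r:ℂ)*u*u^(m+1+r)*(((m+1+r).choose (m+1) : ℕ):ℂ) + (-8)*((m:ℂ)+1)^3*(r:ℂ)*u^2*u^(m+1+r)*(((m+1+r).choose (m+1) : ℕ):ℂ) + (18)*((m:ℂ)+1)^4*u^(m+1+r)*(((m+1+r).choose (m+1) : ℕ):ℂ) + (-8)*((m:ℂ)+1)^4*u*u^(m+1+r)*(((m+1+r).choose (m+1) : ℕ):ℂ) + (16)*((m:ℂ)+1)^4*u^2*u^(m+1+r)*(((m+1+r).choose (m+1) : ℕ):ℂ)) * h4 +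
      ((6)*(r:ℂ)*u^(m+1+r)*(((m+1+r).choose (m+1) : ℕ):ℂ)*(Pp (m+1) r) + (-7)*(r:ℂ)^2*u^(m+1+r)*(((m+1+r).choose (m+1) : ℕ):ℂ)*(Pp (m+1) r) + (-5)*(r:ℂ)^3*u^(m+1+r)*(((m+1+r).choose (m+1) : ℕ):ℂ)*(Pp (m+1) r) + (7)*(r:ℂ)^4*u^(m+1+r)*(((m+1+r).choose (m+1) : ℕ):ℂ)*(Pp (m+1) r) + (-1)*(r:ℂ)^5*u^(m+1+r)*(((m+1+r).choose (m+1) : ℕ):ℂ)*(Pp (m+1) r) + (-12)*((m:ℂ)+1)*u^(m+1+r)*(((m+1+r).choose (m+1) : ℕ):ℂ)*(Pp (m+1) r) + (41)*((m:ℂ)+1)*(r:ℂ)*u^(m+1+r)*(((m+1+r).choose (m+1) : ℕ):ℂ)*(Pp (m+1) r) + (-12)*((m:ℂ)+1)*(r:ℂ)^2*u^(m+1+r)*(((m+1+r).choose (m+1) : ℕ):ℂ)*(Pp (m+1) r) + (-27)*((m:ℂ)+1)*(r:ℂ)^3*u^(m+1+r)*(((m+1+r).choose (m+1) : ℕ):ℂ)*(Pp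 (m+1) r) + (10)*((m:ℂ)+1)*(r:ℂ)^4*u^(m+1+r)*(((m+1+r).choose (m+1) : ℕ):ℂ)*(Pp (m+1) r) + (-54)*((m:ℂ)+1)^2*u^(m+1+r)*(((m+1+r).choose (m+1) : ℕ):ℂ)*(Pp (m+1) r) + (89)*((m:ℂ)+1)^2*(r:ℂ)*u^(m+1+r)*(((m+1+r).choose (m+1) : ℕ):ℂ)*(Pp (m+1) r) + (3)*((m:ℂ)+1)^2*(r:ℂ)^2*u^(m+1+r)*(((m+1+r).choose (m+1) : ℕ):ℂ)*(Pp (m+1) r) + (-24)*((m:ℂ)+1)^2*(r:ℂ)^3*u^(m+1+r)*(((m+1+r).choose (m+1) : ℕ):ℂ)*(Pp (m+1) r) + (-90)*((m:ℂ)+1)^3*u^(m+1+r)*(((m+1+r).choose (m+1) : ℕ):ℂ)*(Pp (m+1) r) + (79)*((m:ℂ)+1)^3*(r:ℂ)*u^(m+1+r)*(((m+1+r).choose (m+1) : ℕ):ℂ)*(Pp (m+1) r) + (8)*((m:ℂ)+1)^3*(r:ℂ)^2*u^(m+1+r)*(((m+1+r).choose (m+1) : ℕ):ℂ)*(Pp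 (m+1) r) + (-66)*((m:ℂ)+1)^4*u^(m+1+r)*(((m+1+r).choose (m+1) : ℕ):ℂ)*(Pp (m+1) r) + (25)*((m:ℂ)+1)^4*(r:ℂ)*u^(m+1+r)*(((m+1+r).choose (m+1) : ℕ):ℂ)*(Pp (m+1) r) + (-18)*((m:ℂ)+1)^5*u^(m+1+r)*(((m+1+r).choose (m+1) : ℕ):ℂ)*(Pp (m+1) r)) * hu

set_option maxHeartbeats 800000 in
lemma boundary (u : ℂ) (hu : u*u = u-1) (m : ℕ) :
    Hg u (m+1) (m+2)
      + (((m+2).factorial : ℕ) : ℂ) * (((m:ℂ)+2)*(1-2*u)) * Tt u (m+2) (m+2) = 0 := by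
  have hC : ((m:ℂ)+2) * (((2*m+4).choose (m+2) : ℕ) : ℂ)
      = (2*(m:ℂ)+4) * (((2*m+3).choose (m+1) : ℕ) : ℂ) := by
    have h := Nat.add_one_mul_choose_eq (2*m+3) (m+1)
    rw [show 2*m+3+1 = 2*m+4 by omega, show m+1+1 = m+2 by omega] at h
    have h' := congrArg (Nat.cast : ℕ → ℂ) h
    push_cast at h'
    linear_combination -h'
  have hf : (((m+2).factorial : ℕ) : ℂ) = ((m:ℂ)+2)*((m:ℂ)+1)*((m.factorial : ℕ):ℂ) := by
    rw [show m+2 = (m+1)+1 by omega, Nat.factorial_succ, Nat.factorial_succ]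
    push_cast; ring
  simp only [Hg, Tt, Qp]
  rw [Pp_boundary, hf, show m+1+(m+2) = 2*m+3 by omega, show m+2+(m+2) = 2*m+4 by omega,
    show 2*(m+2)-(m+2) = m+2 by omega, Nat.choose_self,
    show (2*m+3 : ℕ) = 2*m+3 by rfl]
  push_cast
  linear_combination ((2)*u*u^(m+1+(m+2))*((m.factorial : ℕ):ℂ) + (-4)*u^2*u^(m+1+(m+2))*((m.factorial : ℕ):ℂ) + (3)*(m:ℂ)*u*u^(m+1+(m+2))*((m.factorial : ℕ):ℂ) + (-6)*(m:ℂ)*u^2*u^(m+1+(m+2))*((m.factorial : ℕ):ℂ) + (m:ℂ)^2*u*u^(m+1+(m+2))*((m.factorial : ℕ):ℂ) + (-2)*(m:ℂ)^2*u^2*u^(m+1+(m+2))*((m.factorial : ℕ):ℂ)) * hC + ((-16)*u^(m+1+(m+2))*(((2*m+3).choose (m+1) : ℕ):ℂ)*((m.factorial : ℕ):ℂ) + (-32)*(m:ℂ)*u^(m+1+(m+2))*(((2*m+3).choose (m+1) : ℕ):ℂ)*((m.factorial : ℕ):ℂ) + (-20)*(m:ℂ)^2*u^(m+1+(m+2))*(((2*m+3).choose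 (m+1) : ℕ):ℂ)*((m.factorial : ℕ):ℂ) + (-4)*(m:ℂ)^3*u^(m+1+(m+2))*(((2*m+3).choose (m+1) : ℕ):ℂ)*((m.factorial : ℕ):ℂ)) * hu

lemma Hg_zero (u : ℂ) (n : ℕ) : Hg u n 0 = 0 := by simp [Hg]

lemma rec_all (u : ℂ) (hu : u*u = u-1) (n : ℕ) :
    ((n:ℂ)+1) * (1-2*u) * Ssum u (n+1) = 3*(3*(n:ℂ)+2) * Ssum u n := by
  cases n with
  | zero =>
    simp [Ssum, Tt, Finset.sum_range_succ]
    norm_num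
    linear_combination (-4*u-6)*hu
  | succ m =>
    have key : (((m+2).factorial : ℕ):ℂ) *
        (((m:ℂ)+2)*(1-2*u)*Ssum u (m+2) - 3*(3*(m:ℂ)+5)*Ssum u (m+1)) = 0 := by
      have e1 : Ssum u (m+2) = (∑ r ∈ Finset.range (m+2), Tt u (m+2) r) + Tt u (m+2) (m+2) := by
        rw [Ssum, Finset.sum_range_succ]
      calc (((m+2).factorial : ℕ):ℂ) *
            (((m:ℂ)+2)*(1-2*u)*Ssum u (m+2) - 3*(3*(m:ℂ)+5)*Ssum u (m+1))
          = (∑ r ∈ Finset.range (m+2),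
              ((((m+2).factorial : ℕ):ℂ) * (((m:ℂ)+2)*(1-2*u)) * Tt u (m+2) r
                - (((m+2).factorial : ℕ):ℂ) * (3*(3*(m:ℂ)+5)) * Tt u (m+1) r))
            + (((m+2).factorial : ℕ):ℂ) * (((m:ℂ)+2)*(1-2*u)) * Tt u (m+2) (m+2) := by
            rw [e1, Ssum, Finset.sum_sub_distrib, ← Finset.mul_sum, ← Finset.mul_sum]
            ring
        _ = (∑ r ∈ Finset.range (m+2), (Hg u (m+1) (r+1) - Hg u (m+1) r))
            + (((m+2).factorial : ℕ):ℂ) * (((m:ℂ)+2)*(1-2*u)) * Tt u (m+2) (m+2) := by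
            refine congrArg (· + _) (Finset.sum_congr rfl fun r hr => ?_)
            have hr' : r < m+2 := Finset.mem_range.mp hr
            linear_combination step_term u hu m r (by omega)
        _ = (Hg u (m+1) (m+2) - Hg u (m+1) 0)
            + (((m+2).factorial : ℕ):ℂ) * (((m:ℂ)+2)*(1-2*u)) * Tt u (m+2) (m+2) := by
            rw [Finset.sum_range_sub (fun r => Hg u (m+1) r)]
        _ = 0 := by
            rw [Hg_zero]
            have hb := boundary u hu m
            linear_combination hb
    have hne : (((m+2).factorial : ℕ):ℂ) ≠ 0 := Nat.cast_ne_zero.2 (Nat.factorial_ne_zero _)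
    have h0 := (mul_eq_zero.mp key).resolve_left hne
    rw [show m+1+1 = m+2 from rfl]
    push_cast
    linear_combination h0

lemma key_prod (u : ℂ) (hu : u*u = u-1) (n : ℕ) :
    ((n.factorial : ℕ):ℂ) * (1-2*u)^n * Ssum u n
      = 3^n * ∏ k ∈ Finset.range n, (3*(k:ℂ)+2) := by
  induction n with
  | zero => simp [Ssum, Tt]
  | succ n ih =>
    rw [Finset.prod_range_succ, Nat.factorial_succ, pow_succ, pow_succ]
    push_cast
    linear_combination (((n.factorial : ℕ):ℂ)*(1-2*u)^n)*(rec_all u hu n)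
      + (3*(3*(n:ℂ)+2))*ih

lemma risingFac_succ (a : ℂ) (m : ℕ) :
    risingFac a (m+1) = risingFac a m * (a + m) := Finset.prod_range_succ _ _

lemma risingFac_succ' (a : ℂ) (m : ℕ) :
    risingFac a (m+1) = a * risingFac (a+1) m := by
  rw [risingFac, risingFac, Finset.prod_range_succ']
  simp only [Nat.cast_zero, add_zero]
  rw [mul_comm]
  congr 1
  exact Finset.prod_congr rfl fun i _ => by push_cast; ring

lemma L1 (n : ℕ) : ((3*n+1).factorial : ℕ)
    = 3^n * n.factorial * (∏ k ∈ Finset.range n, (3*k+4)) * (∏ k ∈ Finset.range n, (3*k+2)) := by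
  induction n with
  | zero => simp
  | succ n ih =>
    rw [Finset.prod_range_succ, Finset.prod_range_succ,
      show 3*(n+1)+1 = ((3*n+1)+1+1)+1 by omega,
      Nat.factorial_succ, Nat.factorial_succ, Nat.factorial_succ, ih,
      Nat.factorial_succ, pow_succ]
    ring

lemma L2 (n : ℕ) : (3:ℂ)^(2*n+1) * risingFac (-(n:ℂ)+1/3) (2*n+1)
    = (-1)^n * (∏ k ∈ Finset.range n, (3*(k:ℂ)+2)) * (∏ k ∈ Finset.range n, (3*(k:ℂ)+4)) := by
  induction n with
  | zero =>
    simp [risingFac]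
  | succ n ih =>
    have e0 : risingFac (-((n:ℂ)+1)+1/3) (2*(n+1)+1)
        = (-((n:ℂ)+1)+1/3) * risingFac (-((n:ℂ)+1)+1/3+1) ((2*n+1)+1) := by
      rw [show 2*(n+1)+1 = ((2*n+1)+1)+1 by omega, risingFac_succ']
    have e1 : risingFac (-((n:ℂ)+1)+1/3+1) ((2*n+1)+1)
        = risingFac (-(n:ℂ)+1/3) ((2*n+1)+1) := by
      congr 1; ring
    rw [Finset.prod_range_succ, Finset.prod_range_succ]
    push_cast
    rw [e0, e1, risingFac_succ, show 2*(n+1)+1 = (2*n+1)+1+1 by omega, pow_succ, pow_succ, pow_succ]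
    push_cast
    linear_combination (9*(-(n:ℂ)+1/3-1)*(-(n:ℂ)+1/3+(2*(n:ℂ)+1)))*ih

lemma L3 (n : ℕ) : (3:ℂ)^n * risingFac (2/3) n = ∏ k ∈ Finset.range n, (3*(k:ℂ)+2) := by
  induction n with
  | zero => simp [risingFac]
  | succ n ih =>
    rw [risingFac_succ, Finset.prod_range_succ, pow_succ]
    linear_combination (3*(2/3+(n:ℂ)))*ih

end EqDoneAux

open EqDoneAux

/-- Specialization of equation (Done) at `X = 0`. -/
theorem equation_done_at_zero (n : ℕ) (w : ℂ)
    (hw : w = Complex.exp (Real.pi * I / 3)) :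
    ((-1 : ℂ) ^ n * ((3 * n + 1).factorial : ℂ) /
        (3 ^ (n + 1) * ((n.factorial : ℂ)) ^ 3 *
          risingFac (-(n : ℂ) + 1 / 3) (2 * n + 1))) *
        (n.factorial : ℂ) * risingFac (2 / 3) n =
      (I * Real.sqrt 3) ^ n *
        ∑ r ∈ Finset.range (n + 1),
          w ^ (-(r : ℤ) - (n : ℤ)) * (Nat.choose (n + r) n : ℂ) *
            (Nat.choose (2 * n - r) n : ℂ) := by
  have hw' : w = (1/2 : ℂ) + ((Real.sqrt 3 : ℝ) : ℂ)/2 * I := by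
    rw [hw, show ((Real.pi : ℂ) * I / 3) = ((Real.pi/3 : ℝ) : ℂ) * I by push_cast; ring,
      Complex.exp_mul_I, ← Complex.ofReal_cos, ← Complex.ofReal_sin,
      Real.cos_pi_div_three, Real.sin_pi_div_three]
    push_cast; ring
  have h3 : ((Real.sqrt 3 : ℝ) : ℂ) * ((Real.sqrt 3 : ℝ) : ℂ) = 3 := by
    rw [← Complex.ofReal_mul, Real.mul_self_sqrt (by norm_num : (0:ℝ) ≤ 3)]
    norm_num
  set u : ℂ := 1 - w with hu_def
  have hu : u * u = u - 1 := by
    rw [hu_def, hw']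
    linear_combination (((Real.sqrt 3 : ℝ) : ℂ)*((Real.sqrt 3 : ℝ) : ℂ)/4) * Complex.I_sq
      - (1/4)*h3
  have hwu : w * u = 1 := by
    rw [hu_def, hw']
    linear_combination (-(((Real.sqrt 3 : ℝ) : ℂ)*((Real.sqrt 3 : ℝ) : ℂ))/4) * Complex.I_sq
      + (1/4)*h3
  have hinv : w⁻¹ = u := inv_eq_of_mul_eq_one_right hwu
  have hi : (I * ((Real.sqrt 3:ℝ):ℂ)) = 1 - 2*u := by rw [hu_def, hw']; ring
  have hsum : (∑ r ∈ Finset.range (n+1),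
      w ^ (-(r:ℤ) - (n:ℤ)) * ((n+r).choose n : ℂ) * ((2*n-r).choose n : ℂ))
      = Ssum u n := by
    rw [Ssum]
    refine Finset.sum_congr rfl fun r hr => ?_
    have hpow : w ^ (-(r:ℤ) - (n:ℤ)) = u^(n+r) := by
      rw [show (-(r:ℤ) - (n:ℤ)) = -((n+r : ℕ) : ℤ) by push_cast; ring,
        zpow_neg, zpow_natCast, ← inv_pow, hinv]
    rw [Tt, hpow]
  have hkey := key_prod u hu n
  have hL1 := congrArg (Nat.cast : ℕ → ℂ) (L1 n)
  push_cast at hL1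
  have h3ne : (3:ℂ) ≠ 0 := by norm_num
  have hR1 : risingFac (-(n:ℂ)+1/3) (2*n+1)
      = (-1)^n * (∏ k ∈ Finset.range n, (3*(k:ℂ)+2)) * (∏ k ∈ Finset.range n, (3*(k:ℂ)+4))
        / 3^(2*n+1) := by
    rw [eq_div_iff (pow_ne_zero _ h3ne)]
    linear_combination L2 n
  have hR3 : risingFac (2/3 : ℂ) n = (∏ k ∈ Finset.range n, (3*(k:ℂ)+2)) / 3^n := by
    rw [eq_div_iff (pow_ne_zero _ h3ne)]
    linear_combination L3 n
  have hfne : ((n.factorial : ℕ) : ℂ) ≠ 0 := Nat.cast_ne_zero.2 (Nat.factorial_ne_zero _)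
  have hp2 : (∏ k ∈ Finset.range n, (3*(k:ℂ)+2)) ≠ 0 := by
    refine Finset.prod_ne_zero_iff.2 fun k _ => ?_
    have : ((3*k+2 : ℕ) : ℂ) ≠ 0 := Nat.cast_ne_zero.2 (by omega)
    push_cast at this; exact this
  have hp4 : (∏ k ∈ Finset.range n, (3*(k:ℂ)+4)) ≠ 0 := by
    refine Finset.prod_ne_zero_iff.2 fun k _ => ?_
    have : ((3*k+4 : ℕ) : ℂ) ≠ 0 := Nat.cast_ne_zero.2 (by omega)
    push_cast at this; exact this
  have h12u : (1-2*u) ≠ 0 := by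
    intro h
    have hsq : (1-2*u)*(1-2*u) = -3 := by linear_combination 4*hu
    rw [h, mul_zero] at hsq
    norm_num at hsq
  have hS : Ssum u n = 3^n * (∏ k ∈ Finset.range n, (3*(k:ℂ)+2))
      / (((n.factorial : ℕ) : ℂ) * (1-2*u)^n) := by
    rw [eq_div_iff (mul_ne_zero hfne (pow_ne_zero _ h12u))]
    linear_combination hkey
  rw [hsum, hi, hS, hR1, hR3, hL1]
  have hm1 : ((-1:ℂ))^n ≠ 0 := pow_ne_zero _ (by norm_num)
  set p2 := ∏ k ∈ Finset.range n, (3*(k:ℂ)+2) with hp2def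
  set p4 := ∏ k ∈ Finset.range n, (3*(k:ℂ)+4) with hp4def
  set f := ((n.factorial : ℕ):ℂ) with hfdef
  set q := (1-2*u) with hqdef
  have hqn : q^n ≠ 0 := pow_ne_zero _ h12u
  have hRHS : q^n * (3^n*p2/(f*q^n)) = 3^n*p2/f := by
    rw [← div_div, mul_comm, div_mul_cancel₀ _ hqn]
  rw [hRHS]
  have hD : (3:ℂ)^(n+1)*f^3*((-1)^n*p2*p4/3^(2*n+1)) = ((-1)^n*p2*p4*f^3) / 3^n := by
    rw [eq_div_iff (pow_ne_zero _ h3ne), show 2*n+1 = (n+1)+n by omega, pow_add]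
    field_simp
    ring
  rw [hD, div_div_eq_mul_div, div_mul_eq_mul_div, div_mul_div_comm]
  have hB : ((-1:ℂ))^n*p2*p4*f^3 * 3^n ≠ 0 :=
    mul_ne_zero (mul_ne_zero (mul_ne_zero (mul_ne_zero hm1 hp2) hp4) (pow_ne_zero _ hfne))
      (pow_ne_zero _ h3ne)
  rw [div_eq_div_iff hB hfne]
  ring
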